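/- Let Λ ⊆ R^m be a lattice, t ∈ R^m, γ ≥ 1, and α = d(t,Λ) with 0 < α ≤ λ₁(Λ)/(2γ). Let t† ∈ Λ be a closest lattice vector to t. In R^{m+1}, consider the lattice Λ̃ generated by the vectors (b,0) for b in a basis of Λ together with (t,α). Then the vector ṽ = (t† − t, −α) ∈ Λ̃ has norm √2·α, and every vector of Λ̃ that is not an integer multiple of ṽ has norm at least √2·γ·α; i.e., ṽ is a γ-unique shortest vector of Λ̃. -/

import Mathlib

theorem bdd_embedding_unique_shortest {m n : ℕ} (b : Fin n → EuclideanSpace ℝ (Fin m))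
    (hb : LinearIndependent ℝ b)
    (L : Set (EuclideanSpace ℝ (Fin m)))
    (hL : L = (Submodule.span ℤ (Set.range b) : Submodule ℤ (EuclideanSpace ℝ (Fin m))))
    (γ α : ℝ) (hγ : 1 ≤ γ)
    (t : EuclideanSpace ℝ (Fin m))
    (hα : α = Metric.infDist t L) (hαpos : 0 < α)
    (hbdd : α ≤ sInf {r : ℝ | ∃ u ∈ L, u ≠ 0 ∧ ‖u‖ = r} / (2 * γ))
    (tc : EuclideanSpace ℝ (Fin m)) (htcL : tc ∈ L) (htc : ‖tc - t‖ = α)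
    (Ltilde : Set (WithLp 2 (EuclideanSpace ℝ (Fin m) × ℝ)))
    (hLtilde : Ltilde = {p | ∃ u ∈ L, ∃ a : ℤ,
      p = (WithLp.equiv 2 (EuclideanSpace ℝ (Fin m) × ℝ)).symm (u - (a : ℝ) • t, -(a : ℝ) * α)})
    (vt : WithLp 2 (EuclideanSpace ℝ (Fin m) × ℝ))
    (hvt : vt = (WithLp.equiv 2 (EuclideanSpace ℝ (Fin m) × ℝ)).symm (tc - t, -α)) :
    ‖vt‖ = Real.sqrt 2 * α ∧
      ∀ p ∈ Ltilde, (∀ k : ℤ, p ≠ k • vt) → Real.sqrt 2 * γ * α ≤ ‖p‖ := by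
  have hγpos : (0:ℝ) < γ := lt_of_lt_of_le one_pos hγ
  -- shortest vector bound
  have hlam : ∀ w ∈ L, w ≠ 0 → 2 * γ * α ≤ ‖w‖ := by
    intro w hw hw0
    have hmem : ‖w‖ ∈ {r : ℝ | ∃ u ∈ L, u ≠ 0 ∧ ‖u‖ = r} := ⟨w, hw, hw0, rfl⟩
    have hbdd0 : BddBelow {r : ℝ | ∃ u ∈ L, u ≠ 0 ∧ ‖u‖ = r} := by
      refine ⟨0, fun r hr => ?_⟩
      obtain ⟨u, _, _, hu⟩ := hr
      simpa [← hu] using norm_nonneg u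
    have h1 := csInf_le hbdd0 hmem
    have h2 : 2 * γ * α ≤ sInf {r : ℝ | ∃ u ∈ L, u ≠ 0 ∧ ‖u‖ = r} := by
      rw [le_div_iff₀ (by positivity)] at hbdd
      linarith
    linarith
  have hnorm : ∀ (x : EuclideanSpace ℝ (Fin m)) (y : ℝ),
      ‖(WithLp.equiv 2 (EuclideanSpace ℝ (Fin m) × ℝ)).symm (x, y)‖
        = Real.sqrt (‖x‖ ^ 2 + y ^ 2) := by
    intro x y
    rw [WithLp.prod_norm_eq_of_L2]
    simp [Real.norm_eq_abs, sq_abs]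
  constructor
  · rw [hvt, hnorm, htc]
    rw [show α ^ 2 + (-α)^2 = 2 * α ^ 2 by ring, Real.sqrt_mul (by norm_num),
      Real.sqrt_sq hαpos.le]
  · intro p hp hk
    rw [hLtilde] at hp
    obtain ⟨u, hu, a, hpe⟩ := hp
    -- u ≠ a • tc
    have hune : u ≠ (a : ℝ) • tc := by
      intro h
      apply hk a
      rw [hpe, hvt, ← Int.cast_smul_eq_zsmul ℝ, WithLp.equiv_symm_apply, ← WithLp.toLp_smul (p := 2) (c := (a:ℝ)) (x := (tc - t, -α))]
      congr 1
      rw [h, Prod.smul_mk, Prod.mk.injEq]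
      refine ⟨by rw [smul_sub], by rw [smul_eq_mul]; ring⟩
    have hwL : u - (a : ℝ) • tc ∈ L := by
      rw [hL] at hu htcL ⊢
      have : (a : ℝ) • tc = a • tc := (Int.cast_smul_eq_zsmul ℝ a tc).symm ▸ rfl
      rw [Int.cast_smul_eq_zsmul ℝ]
      exact sub_mem hu (zsmul_mem htcL a)
    have hwne : u - (a : ℝ) • tc ≠ 0 := sub_ne_zero.mpr hune
    have hlb := hlam _ hwL hwne
    -- triangle
    have htr : ‖u - (a:ℝ) • tc‖ ≤ ‖u - (a:ℝ) • t‖ + |(a:ℝ)| * α := by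
      have : u - (a:ℝ) • tc = (u - (a:ℝ) • t) - (a:ℝ) • (tc - t) := by
        rw [smul_sub]; abel
      rw [this]
      calc ‖(u - (a:ℝ) • t) - (a:ℝ) • (tc - t)‖
          ≤ ‖u - (a:ℝ) • t‖ + ‖(a:ℝ) • (tc - t)‖ := norm_sub_le _ _
        _ = ‖u - (a:ℝ) • t‖ + |(a:ℝ)| * α := by
            rw [norm_smul, Real.norm_eq_abs, htc]
    rw [hpe, hnorm]
    have key : 2 * γ ^ 2 * α ^ 2 ≤ ‖u - (a:ℝ) • t‖ ^ 2 + (-(a:ℝ) * α) ^ 2 := by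
      set x := ‖u - (a:ℝ) • t‖ with hx
      have hx0 : 0 ≤ x := norm_nonneg _
      have hβ0 : 0 ≤ |(a:ℝ)| := abs_nonneg _
      have h2 : (-(a:ℝ) * α) ^ 2 = |(a:ℝ)| ^ 2 * α ^ 2 := by
        rw [sq_abs]; ring
      rw [h2]
      rcases le_or_gt (|(a:ℝ)|) (2 * γ) with hc | hc
      · have h3 : (2*γ - |(a:ℝ)|) * α ≤ x := by nlinarith
        have hs : 0 ≤ (2*γ - |(a:ℝ)|) * α := by
          apply mul_nonneg (by linarith) hαpos.le
        have h4 : ((2*γ - |(a:ℝ)|) * α) * ((2*γ - |(a:ℝ)|) * α) ≤ x * x :=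
          mul_le_mul h3 h3 hs hx0
        nlinarith [sq_nonneg ((|(a:ℝ)| - γ) * α)]
      · have h5 : (0:ℝ) < (|(a:ℝ)| - 2*γ) * (|(a:ℝ)| + 2*γ) :=
          mul_pos (by linarith) (by positivity)
        nlinarith [mul_pos h5 (mul_pos hαpos hαpos), sq_nonneg (γ * α)]
    calc Real.sqrt 2 * γ * α = Real.sqrt (2 * γ ^ 2 * α ^ 2) := by
          rw [show 2 * γ ^ 2 * α ^ 2 = 2 * (γ * α) ^ 2 by ring, Real.sqrt_mul (by norm_num),
            Real.sqrt_sq (by positivity)]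
          ring
      _ ≤ _ := Real.sqrt_le_sqrt key
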